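/- arXiv:2109.05543 — 2 statements merged into one kernel-verified Lean document; each statement's English description precedes it below -/
import Mathlib

section
/- Let H be an open affine half-space in ℝ^N, let Ω ⊊ ℝ^N be a nonempty open set satisfying Ω = Ω_H, and let f : Ω → ℝ be a nonnegative measurable function. Then the polarization f_H (defined on Ω via the zero extension of f) is a rearrangement of f: for every t ∈ ℝ, the Lebesgue measure of {x ∈ Ω : f_H(x) > t} equals the Lebesgue measure of {x ∈ Ω : f(x) > t}. -/
open MeasureTheory
open scoped RealInnerProductSpace ENNReal

/-- Reflection of `ℝ^N` across the hyperplane `{x : ⟪x, u⟫ = c}` (for a unit vector `u`). -/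
noncomputable def reflHyp {N : ℕ} (u : EuclideanSpace ℝ (Fin N)) (c : ℝ)
    (x : EuclideanSpace ℝ (Fin N)) : EuclideanSpace ℝ (Fin N) :=
  x - (2 * (⟪x, u⟫ - c)) • u

/-- The open affine half-space `{x : ⟪x, u⟫ < c}`. -/
def halfSpace {N : ℕ} (u : EuclideanSpace ℝ (Fin N)) (c : ℝ) :
    Set (EuclideanSpace ℝ (Fin N)) :=
  {x | ⟪x, u⟫ < c}

/-- Polarization of a set `Ω` with respect to the half-space `H = halfSpace u c`:
`Ω_H = ((Ω ∪ σ_H(Ω)) ∩ H) ∪ (Ω ∩ σ_H(Ω))`. -/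
noncomputable def polSet {N : ℕ} (u : EuclideanSpace ℝ (Fin N)) (c : ℝ)
    (Ω : Set (EuclideanSpace ℝ (Fin N))) : Set (EuclideanSpace ℝ (Fin N)) :=
  ((Ω ∪ reflHyp u c '' Ω) ∩ halfSpace u c) ∪ (Ω ∩ reflHyp u c '' Ω)

/-- Polarization of a function `f : ℝ^N → ℝ` with respect to `H = halfSpace u c`:
`f_H(x) = max (f x) (f (σ_H x))` if `x ∈ H`, and `f_H(x) = min (f x) (f (σ_H x))` otherwise. -/
noncomputable def polFun {N : ℕ} (u : EuclideanSpace ℝ (Fin N)) (c : ℝ)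
    (f : EuclideanSpace ℝ (Fin N) → ℝ) (x : EuclideanSpace ℝ (Fin N)) : ℝ :=
  if ⟪x, u⟫ < c then max (f x) (f (reflHyp u c x))
  else min (f x) (f (reflHyp u c x))

variable {N : ℕ} {u : EuclideanSpace ℝ (Fin N)} {c : ℝ}

lemma inner_reflHyp (hu : ‖u‖ = 1) (x : EuclideanSpace ℝ (Fin N)) :
    ⟪reflHyp u c x, u⟫ = 2 * c - ⟪x, u⟫ := by
  have huu : ⟪u, u⟫ = (1:ℝ) := by
    rw [real_inner_self_eq_norm_sq, hu]; norm_num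
  have h : ⟪x - (2 * (⟪x, u⟫ - c)) • u, u⟫ = ⟪x,u⟫ - (2*(⟪x,u⟫-c))*⟪u,u⟫ := by
    rw [inner_sub_left, real_inner_smul_left]
  rw [reflHyp] at *
  rw [h, huu]; ring

lemma reflHyp_invol (hu : ‖u‖ = 1) (x : EuclideanSpace ℝ (Fin N)) :
    reflHyp u c (reflHyp u c x) = x := by
  have h := inner_reflHyp (c := c) hu x
  rw [show reflHyp u c (reflHyp u c x) = reflHyp u c x - (2*(⟪reflHyp u c x, u⟫ - c)) • u from rfl, h]
  rw [reflHyp]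
  module

lemma reflHyp_eq (hu : ‖u‖ = 1) (x : EuclideanSpace ℝ (Fin N)) :
    reflHyp u c x = Submodule.reflection ((ℝ ∙ u)ᗮ) x + (2*c) • u := by
  rw [Submodule.reflection_orthogonal_apply, Submodule.reflection_singleton_apply, hu, real_inner_comm]
  rw [reflHyp]
  push_cast
  module

lemma reflHyp_measurePreserving (hu : ‖u‖ = 1) :
    MeasurePreserving (reflHyp u c) (volume : Measure (EuclideanSpace ℝ (Fin N))) volume := by
  have : reflHyp u c = (fun y => y + (2*c) • u) ∘ (Submodule.reflection ((ℝ ∙ u)ᗮ)) := by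
    funext x; exact reflHyp_eq hu x
  rw [this]
  exact (measurePreserving_add_right volume _).comp
    ((Submodule.reflection ((ℝ ∙ u)ᗮ)).measurePreserving)

lemma hyperplane_null (hu : ‖u‖ = 1) (c : ℝ) :
    volume {x : EuclideanSpace ℝ (Fin N) | ⟪x, u⟫ = c} = 0 := by
  set K : Submodule ℝ (EuclideanSpace ℝ (Fin N)) := LinearMap.ker ((innerSL ℝ u : EuclideanSpace ℝ (Fin N) →L[ℝ] ℝ) : EuclideanSpace ℝ (Fin N) →ₗ[ℝ] ℝ) with hK
  have hKne : K ≠ ⊤ := by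
    intro h
    have hm : u ∈ K := h ▸ Submodule.mem_top
    have h0 : ⟪u, u⟫ = (0 : ℝ) := hm
    rw [real_inner_self_eq_norm_sq, hu] at h0; norm_num at h0
  have h0 : volume (K : Set (EuclideanSpace ℝ (Fin N))) = 0 := Measure.addHaar_submodule volume K hKne
  have hset : {x : EuclideanSpace ℝ (Fin N) | ⟪x, u⟫ = c}
      = (fun x => x + (-(c • u))) ⁻¹' (K : Set _) := by
    have huu : ⟪u, u⟫ = (1 : ℝ) := by
      rw [real_inner_self_eq_norm_sq, hu]; norm_num
    ext x
    simp only [Set.mem_setOf_eq, Set.mem_preimage, SetLike.mem_coe, hK, LinearMap.mem_ker,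
      ContinuousLinearMap.coe_coe, innerSL_apply_apply]
    rw [show x + -(c • u) = x - c • u by abel, inner_sub_right, real_inner_smul_right, huu,
      real_inner_comm u x]
    constructor <;> intro h <;> linarith
  rw [hset, (measurePreserving_add_right volume _).measure_preimage]
  · exact h0
  · exact ((innerSL ℝ u).isClosed_ker.measurableSet).nullMeasurableSet

lemma vol_inter_le (hu : ‖u‖ = 1) (X : Set (EuclideanSpace ℝ (Fin N))) :
    volume (X ∩ {x | ⟪x, u⟫ ≤ c}) = volume (X ∩ {x | ⟪x, u⟫ < c}) := by
  apply le_antisymm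
  · have hsub : X ∩ {x | ⟪x, u⟫ ≤ c} ⊆ (X ∩ {x | ⟪x, u⟫ < c}) ∪ {x | ⟪x, u⟫ = c} := by
      rintro x ⟨hx, (h : ⟪x, u⟫ ≤ c)⟩
      rcases lt_or_eq_of_le h with h' | h'
      · exact Or.inl ⟨hx, h'⟩
      · exact Or.inr h'
    refine (measure_mono hsub).trans ((measure_union_le _ _).trans ?_)
    rw [hyperplane_null hu c, add_zero]
  · exact measure_mono (Set.inter_subset_inter_right _ fun x (hx : ⟪x, u⟫ < c) => le_of_lt hx)

lemma volume_polSet (hu : ‖u‖ = 1) {A : Set (EuclideanSpace ℝ (Fin N))}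
    (hA : MeasurableSet A) : volume (polSet u c A) = volume A := by
  have hmp := reflHyp_measurePreserving (c := c) hu
  have hinv : Function.Involutive (reflHyp u c) := reflHyp_invol hu
  have himg : reflHyp u c '' A = reflHyp u c ⁻¹' A :=
    congrFun (Set.image_eq_preimage_of_inverse hinv hinv) A
  set B := reflHyp u c ⁻¹' A with hBdef
  have hB : MeasurableSet B := hmp.measurable hA
  have hcont : Continuous fun x : EuclideanSpace ℝ (Fin N) => ⟪x, u⟫ :=
    continuous_id.inner continuous_const
  have hH : MeasurableSet (halfSpace u c) :=
    (isOpen_lt hcont continuous_const).measurableSet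
  have hrefl_pre : ∀ X : Set (EuclideanSpace ℝ (Fin N)), MeasurableSet X →
      volume (reflHyp u c ⁻¹' X) = volume X := fun X hX =>
    hmp.measure_preimage hX.nullMeasurableSet
  have h1 : polSet u c A ∩ halfSpace u c = (A ∪ B) ∩ halfSpace u c := by
    rw [polSet, himg]; ext x
    simp only [Set.mem_inter_iff, Set.mem_union]; tauto
  have h2 : polSet u c A \ halfSpace u c = (A ∩ B) \ halfSpace u c := by
    rw [polSet, himg]; ext x
    simp only [Set.mem_diff, Set.mem_inter_iff, Set.mem_union]; tauto
  have hpre : ∀ X : Set (EuclideanSpace ℝ (Fin N)),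
      reflHyp u c ⁻¹' (X \ halfSpace u c)
        = (reflHyp u c ⁻¹' X) ∩ {x | ⟪x, u⟫ ≤ c} := by
    intro X
    ext x
    simp only [Set.mem_preimage, Set.mem_diff, Set.mem_inter_iff, Set.mem_setOf_eq,
      halfSpace, inner_reflHyp hu]
    constructor <;> rintro ⟨h, h'⟩ <;> exact ⟨h, by linarith⟩
  have hABpre : reflHyp u c ⁻¹' (A ∩ B) = A ∩ B := by
    ext x
    simp only [Set.mem_preimage, Set.mem_inter_iff, hBdef, Set.mem_preimage, hinv x]
    tauto
  have h3 : volume ((A ∩ B) \ halfSpace u c) = volume ((A ∩ B) ∩ halfSpace u c) := by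
    rw [← hrefl_pre _ (((hA.inter hB)).diff hH), hpre, hABpre, vol_inter_le hu]; rfl
  have h4 : volume (A \ halfSpace u c) = volume (B ∩ halfSpace u c) := by
    rw [← hrefl_pre _ (hA.diff hH), hpre, vol_inter_le hu]; rfl
  have h5 : volume ((A ∪ B) ∩ halfSpace u c) + volume ((A ∩ B) ∩ halfSpace u c)
      = volume (A ∩ halfSpace u c) + volume (B ∩ halfSpace u c) := by
    rw [Set.union_inter_distrib_right, show (A ∩ B) ∩ halfSpace u c
      = (A ∩ halfSpace u c) ∩ (B ∩ halfSpace u c) by ext x; simp only [Set.mem_inter_iff]; tauto]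
    exact measure_union_add_inter _ (hB.inter hH)
  calc volume (polSet u c A)
      = volume (polSet u c A ∩ halfSpace u c) + volume (polSet u c A \ halfSpace u c) :=
        (measure_inter_add_diff _ hH).symm
    _ = volume ((A ∪ B) ∩ halfSpace u c) + volume ((A ∩ B) ∩ halfSpace u c) := by
        rw [h1, h2, h3]
    _ = volume (A ∩ halfSpace u c) + volume (A \ halfSpace u c) := by rw [h5, h4]
    _ = volume A := measure_inter_add_diff _ hH

/-- If `Ω ⊊ ℝ^N` is a nonempty open set with `Ω = Ω_H` and `f : Ω → ℝ` is a
nonnegative measurable function, then the polarization `f_H` (via the zero extension) is a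
rearrangement of `f` on `Ω`. -/
theorem polFun_is_rearrangement {N : ℕ}
    (u : EuclideanSpace ℝ (Fin N)) (hu : ‖u‖ = 1) (c : ℝ)
    (Ω : Set (EuclideanSpace ℝ (Fin N))) (hne : Ω.Nonempty) (hopen : IsOpen Ω)
    (hproper : Ω ≠ Set.univ) (hΩ : Ω = polSet u c Ω)
    (f : EuclideanSpace ℝ (Fin N) → ℝ) (hmeas : Measurable (Ω.indicator f))
    (hf : ∀ x ∈ Ω, 0 ≤ f x) :
    ∀ t : ℝ, volume {x ∈ Ω | t < polFun u c (Ω.indicator f) x} = volume {x ∈ Ω | t < f x} := by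
  intro t
  set g := Ω.indicator f with hg
  have hg0 : ∀ x, 0 ≤ g x := fun x => by
    by_cases hx : x ∈ Ω
    · rw [hg, Set.indicator_of_mem hx]; exact hf x hx
    · rw [hg, Set.indicator_of_notMem hx]
  by_cases ht : 0 ≤ t
  · set A := {x | t < g x} with hA
    have hAm : MeasurableSet A := measurableSet_lt measurable_const hmeas
    have hAsub : A ⊆ Ω := by
      intro x hx
      by_contra hxo
      have h0 : g x = 0 := by rw [hg]; exact Set.indicator_of_notMem hxo f
      rw [hA, Set.mem_setOf_eq, h0] at hx
      linarith
    have hinv : Function.Involutive (reflHyp u c) := reflHyp_invol (c := c) hu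
    have himg : ∀ S : Set (EuclideanSpace ℝ (Fin N)),
        reflHyp u c '' S = reflHyp u c ⁻¹' S := fun S =>
      congrFun (Set.image_eq_preimage_of_inverse hinv hinv) S
    have key : {x | t < polFun u c g x} = polSet u c A := by
      ext x
      simp only [Set.mem_setOf_eq, polFun, polSet, himg, Set.mem_union, Set.mem_inter_iff,
        Set.mem_preimage, halfSpace, Set.mem_setOf_eq, hA]
      by_cases hx : ⟪x, u⟫ < c
      · simp only [if_pos hx, lt_max_iff]; tauto
      · simp only [if_neg hx, lt_min_iff]; tauto
    have hsub : polSet u c A ⊆ Ω := by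
      have hmono : polSet u c A ⊆ polSet u c Ω :=
        Set.union_subset_union
          (Set.inter_subset_inter
            (Set.union_subset_union hAsub (Set.image_mono hAsub)) subset_rfl)
          (Set.inter_subset_inter hAsub (Set.image_mono hAsub))
      exact hmono.trans hΩ.symm.subset
    have hset2 : {x ∈ Ω | t < polFun u c g x} = polSet u c A := by
      ext x
      simp only [Set.mem_setOf_eq]
      constructor
      · rintro ⟨_, h⟩; exact (Set.ext_iff.1 key x).1 h
      · intro h; exact ⟨hsub h, (Set.ext_iff.1 key x).2 h⟩
    have hset1 : {x ∈ Ω | t < f x} = A := by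
      ext x
      simp only [Set.mem_setOf_eq, hA]
      constructor
      · rintro ⟨hxΩ, h⟩; rwa [hg, Set.indicator_of_mem hxΩ]
      · intro h
        have hxΩ : x ∈ Ω := hAsub h
        refine ⟨hxΩ, ?_⟩
        rwa [hg, Set.indicator_of_mem hxΩ] at h
    rw [hset1, hset2, volume_polSet hu hAm]
  · push_neg at ht
    have e1 : {x ∈ Ω | t < f x} = Ω := by
      ext x
      simp only [Set.mem_setOf_eq]
      exact ⟨fun h => h.1, fun h => ⟨h, lt_of_lt_of_le ht (hf x h)⟩⟩
    have e2 : {x ∈ Ω | t < polFun u c g x} = Ω := by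
      ext x
      simp only [Set.mem_setOf_eq]
      refine ⟨fun h => h.1, fun h => ⟨h, ?_⟩⟩
      rw [polFun]
      split_ifs
      · exact lt_of_lt_of_le ht (le_max_of_le_left (hg0 x))
      · exact lt_of_lt_of_le ht (le_min (hg0 x) (hg0 _))
    rw [e1, e2]
end

section
/- Let f : B_1(0) → ℝ be a function on the open unit ball of ℝ^N such that for every open affine half-space H ⊂ ℝ^N with 0 ∈ H, the polarization f_H (defined on B_1(0) via the zero extension of f) coincides with f on B_1(0). Then f(x) ≥ f(y) for all x, y ∈ B_1(0) with |x| < |y|. -/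
open MeasureTheory
open scoped RealInnerProductSpace ENNReal

/-- If a function on the unit ball is polarization invariant with respect to
every open affine half-space containing the origin, then it is radially decreasing:
`f x ≥ f y` whenever `‖x‖ < ‖y‖`. -/
theorem polFun_invariant_radially_decreasing {N : ℕ}
    (f : EuclideanSpace ℝ (Fin N) → ℝ)
    (hpol : ∀ (u : EuclideanSpace ℝ (Fin N)) (c : ℝ), ‖u‖ = 1 →
      (0 : EuclideanSpace ℝ (Fin N)) ∈ halfSpace u c →
      ∀ x ∈ Metric.ball (0 : EuclideanSpace ℝ (Fin N)) 1,
        polFun u c ((Metric.ball (0 : EuclideanSpace ℝ (Fin N)) 1).indicator f) x = f x) :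
    ∀ x ∈ Metric.ball (0 : EuclideanSpace ℝ (Fin N)) 1,
      ∀ y ∈ Metric.ball (0 : EuclideanSpace ℝ (Fin N)) 1, ‖x‖ < ‖y‖ → f y ≤ f x := by
  intro x hx y hy hlt
  have hxy : y - x ≠ 0 := by
    intro h
    rw [sub_eq_zero] at h
    subst h
    exact lt_irrefl _ hlt
  set d : EuclideanSpace ℝ (Fin N) := y - x with hd
  have hr : 0 < ‖d‖ := norm_pos_iff.mpr hxy
  set r : ℝ := ‖d‖ with hrdef
  set u : EuclideanSpace ℝ (Fin N) := (r⁻¹ : ℝ) • d with hu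
  have hu1 : ‖u‖ = 1 := by
    rw [hu, norm_smul, norm_inv, Real.norm_eq_abs, abs_of_pos hr]
    field_simp
    exact hrdef.symm
  set c : ℝ := ⟪x, u⟫ + r / 2 with hc
  -- r * ⟪x, u⟫ = ⟪x, d⟫
  have hxu : r * ⟪x, u⟫ = ⟪x, d⟫ := by
    rw [hu, real_inner_smul_right]
    field_simp
  -- r ^ 2 in terms of inner products
  have hr2 : r ^ 2 = ‖y‖ ^ 2 - 2 * ⟪y, x⟫ + ‖x‖ ^ 2 := by
    rw [hrdef, hd, norm_sub_sq_real]
  have hxd : ⟪x, d⟫ = ⟪x, y⟫ - ‖x‖ ^ 2 := by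
    rw [hd, inner_sub_right, real_inner_self_eq_norm_sq]
  have hsymm : ⟪y, x⟫ = ⟪x, y⟫ := real_inner_comm x y
  have hn2 : ‖x‖ ^ 2 < ‖y‖ ^ 2 := by
    have := pow_lt_pow_left₀ hlt (norm_nonneg x) (two_ne_zero)
    simpa using this
  have hrc : r * c = (‖y‖ ^ 2 - ‖x‖ ^ 2) / 2 := by
    rw [hc, mul_add, hxu, hxd]
    nlinarith [hr2, hsymm]
  have hc0 : 0 < c := by
    have h1 : 0 < r * c := by rw [hrc]; linarith
    nlinarith [hr, h1]
  have h0H : (0 : EuclideanSpace ℝ (Fin N)) ∈ halfSpace u c := by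
    simpa [halfSpace] using hc0
  -- reflection of x is y
  have hrefl : reflHyp u c x = y := by
    rw [reflHyp]
    have h1 : ⟪x, u⟫ - c = -(r / 2) := by rw [hc]; ring
    rw [h1, hu, smul_smul]
    have h2 : 2 * -(r / 2) * r⁻¹ = -1 := by field_simp
    rw [h2, neg_one_smul, sub_neg_eq_add, hd]
    abel
  have H := hpol u c hu1 h0H x hx
  rw [polFun, if_pos (by rw [hc]; linarith), hrefl,
    Set.indicator_of_mem hx, Set.indicator_of_mem hy] at H
  calc f y ≤ max (f x) (f y) := le_max_right _ _
    _ = f x := H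
end
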